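/- Let n ≥ 1, let μ be a probability measure on F_m whose support is contained in {a_i^k : 1 ≤ i ≤ m, 1 ≤ |k| ≤ n}, fix 1 ≤ i ≤ m, let B := {a_i, a_i², …, a_i^n}, and set p_j := F_μ(e, a_i^j; B \ {a_i^j}) for 1 ≤ j ≤ n. Then for every integer k > n one has F_μ(e, a_i^k) = Σ_{j=1}^{n} p_j · F_μ(e, a_i^{k-j}). -/

import Mathlib

set_option linter.unusedSectionVars false
open scoped ENNReal


open scoped BigOperators

/-- Restricted first-passage function `F_μ(x, y; S)`: the total weight of paths from `x`
to `y` that avoid `S ∪ {y}` before arriving at `y`. -/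
noncomputable def FP {G : Type*} [Group G] (μ : G → ℝ) (x y : G) (S : Set G) : ℝ :=
  ∑' k : ℕ,
    ∑' f : {f : Fin (k + 1) → G // f 0 = x ∧ f (Fin.last k) = y ∧
        ∀ j : Fin k, f j.castSucc ∉ S ∪ {y}},
      ∏ j : Fin k, μ ((f.1 j.castSucc)⁻¹ * f.1 j.succ)

/-- `μ` is a probability measure on `G`. -/
def IsProb {G : Type*} (μ : G → ℝ) : Prop := (∀ g, 0 ≤ μ g) ∧ ∑' g, μ g = 1


open scoped BigOperators ENNReal

section Walks

variable {G : Type*} [Group G]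

/-- weight of a step list -/
noncomputable def pw (W : G → ℝ≥0∞) (s : List G) : ℝ≥0∞ := (s.map W).prod

/-- walk condition: starts at x, ends at y, intermediate positions avoid S ∪ {y} -/
def wcond (x y : G) (S : Set G) (s : List G) : Prop :=
  x * s.prod = y ∧ ∀ t < s.length, x * (s.take t).prod ∉ S ∪ {y}

/-- first passage series in ℝ≥0∞ -/
noncomputable def FPE (W : G → ℝ≥0∞) (x y : G) (S : Set G) : ℝ≥0∞ :=
  ∑' s : {s : List G // wcond x y S s}, pw W s.1

lemma pw_nil (W : G → ℝ≥0∞) : pw W [] = 1 := rfl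

lemma pw_cons (W : G → ℝ≥0∞) (g : G) (s : List G) : pw W (g :: s) = W g * pw W s := by
  simp [pw]

lemma pw_append (W : G → ℝ≥0∞) (s t : List G) : pw W (s ++ t) = pw W s * pw W t := by
  simp [pw]

lemma pw_ne_top (W : G → ℝ≥0∞) (hW : ∀ g, W g ≠ ⊤) (s : List G) : pw W s ≠ ⊤ := by
  induction s with
  | nil => simp [pw_nil]
  | cons g s ih => rw [pw_cons]; exact ENNReal.mul_ne_top (hW g) ih

lemma pw_ne_zero_iff (W : G → ℝ≥0∞) (s : List G) :
    pw W s ≠ 0 ↔ ∀ g ∈ s, W g ≠ 0 := by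
  induction s with
  | nil => simp [pw_nil]
  | cons g s ih =>
    rw [pw_cons]
    simp [mul_ne_zero_iff, ih]

/-- cons equivalence for fixed-length lists -/
def consEquiv (r : ℕ) : (G × {t : List G // t.length = r}) ≃ {t : List G // t.length = r + 1} where
  toFun := fun p => ⟨p.1 :: p.2.1, by simp [p.2.2]⟩
  invFun := fun t =>
    match t with
    | ⟨[], h⟩ => absurd h (by simp)
    | ⟨g :: l, h⟩ => (g, ⟨l, by simpa using h⟩)
  left_inv := by rintro ⟨g, ⟨l, hl⟩⟩; rfl
  right_inv := by rintro ⟨t, ht⟩; cases t with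
    | nil => simp at ht
    | cons g l => rfl

/-- total weight of all lists of a fixed length is 1 -/
lemma tsum_len (W : G → ℝ≥0∞) (hW : ∑' g, W g = 1) (r : ℕ) :
    ∑' t : {t : List G // t.length = r}, pw W t.1 = 1 := by
  induction r with
  | zero =>
    have huniq : ∀ t : {t : List G // t.length = 0}, t = ⟨[], rfl⟩ := by
      rintro ⟨t, ht⟩
      simp only [List.length_eq_zero_iff] at ht
      simp [ht]
    rw [tsum_eq_single (⟨[], rfl⟩ : {t : List G // t.length = 0})
      (fun b hb => absurd (huniq b) hb)]
    simp [pw_nil]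
  | succ r ih =>
    rw [← (consEquiv (G := G) r).tsum_eq]
    have : ∀ p : G × {t : List G // t.length = r},
        pw W ((consEquiv (G := G) r p).1) = W p.1 * pw W p.2.1 := by
      rintro ⟨g, ⟨l, hl⟩⟩; simp [consEquiv, pw_cons]
    simp only [this]
    rw [ENNReal.tsum_prod']
    simp_rw [ENNReal.tsum_mul_left, ih, mul_one]
    rw [hW]

/-- two wcond-walks that are prefixes of a common list are equal (generalized version) -/
lemma prefix_unique {x : G} {Y : Set G} {u v u' v' : List G}
    (h : u ++ v = u' ++ v')
    (hu : x * u.prod ∈ Y) (hu' : x * u'.prod ∈ Y)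
    (hua : ∀ t < u.length, x * (u.take t).prod ∉ Y)
    (hua' : ∀ t < u'.length, x * (u'.take t).prod ∉ Y) :
    u = u' ∧ v = v' := by
  have hlen : u.length = u'.length := by
    by_contra hne
    rcases Nat.lt_or_ge u.length u'.length with hlt | hge
    · -- u is a strict prefix of u'
      have htake : u'.take u.length = u := by
        have h1 : (u ++ v).take u.length = u := by
          rw [List.take_append_of_le_length le_rfl, List.take_length]
        have h2 : (u' ++ v').take u.length = u'.take u.length := by
          rw [List.take_append_of_le_length hlt.le]
        rw [← h2, ← h, h1]
      have := hua' u.length hlt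
      rw [htake] at this
      exact this hu
    · rcases Nat.lt_or_ge u'.length u.length with hlt' | hge'
      · have htake : u.take u'.length = u' := by
          have h1 : (u' ++ v').take u'.length = u' := by
            rw [List.take_append_of_le_length le_rfl, List.take_length]
          have h2 : (u ++ v).take u'.length = u.take u'.length := by
            rw [List.take_append_of_le_length hlt'.le]
          rw [← h2, h, h1]
        have := hua u'.length hlt'
        rw [htake] at this
        exact this hu'
      · exact hne (le_antisymm hge' hge)
  have hu'' : u = u' := by
    have h1 : (u ++ v).take u.length = u := by
      rw [List.take_append_of_le_length le_rfl, List.take_length]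
    have h2 : (u' ++ v').take u'.length = u' := by
      rw [List.take_append_of_le_length le_rfl, List.take_length]
    rw [← h1, ← h2, h, hlen]
  exact ⟨hu'', by
    have := h
    rw [hu''] at this
    exact List.append_cancel_left this⟩

end Walks
section Walks2

variable {G : Type*} [Group G]

/-- weight of wcond-walks of a fixed length -/
noncomputable def AW (W : G → ℝ≥0∞) (x y : G) (S : Set G) (l : ℕ) : ℝ≥0∞ :=
  ∑' s : {s : {s : List G // wcond x y S s} // s.1.length = l}, pw W s.1.1

lemma FPE_eq_tsum_AW (W : G → ℝ≥0∞) (x y : G) (S : Set G) :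
    FPE W x y S = ∑' l : ℕ, AW W x y S l := by
  rw [FPE, ← (Equiv.sigmaFiberEquiv (fun s : {s : List G // wcond x y S s} => s.1.length)).tsum_eq,
    ENNReal.tsum_sigma']
  rfl

lemma AW_le_one (W : G → ℝ≥0∞) (hW : ∑' g, W g = 1) (x y : G) (S : Set G) (l : ℕ) :
    AW W x y S l ≤ 1 := by
  have hinj : Function.Injective
      (fun s : {s : {s : List G // wcond x y S s} // s.1.length = l} =>
        (⟨s.1.1, s.2⟩ : {t : List G // t.length = l})) := by
    rintro ⟨⟨s, hs⟩, hsl⟩ ⟨⟨t, ht⟩, htl⟩ h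
    simp only [Subtype.mk_eq_mk] at h
    simp [h]
  calc AW W x y S l ≤ ∑' t : {t : List G // t.length = l}, pw W t.1 :=
        ENNReal.tsum_comp_le_tsum_of_injective hinj (fun t => pw W t.1)
    _ = 1 := tsum_len W hW l

lemma sum_AW_le_one (W : G → ℝ≥0∞) (hW : ∑' g, W g = 1) (x y : G) (S : Set G) (N : ℕ) :
    ∑ l ∈ Finset.range (N + 1), AW W x y S l ≤ 1 := by
  classical
  set T := (l : Fin (N + 1)) ×
    ({s : {s : List G // wcond x y S s} // s.1.length = l.1} × {t : List G // t.length = N - l.1})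
    with hT
  have hφval : ∀ p : T, (p.2.1.1.1 ++ p.2.2.1).length = N := by
    rintro ⟨l, ⟨⟨⟨s, hs⟩, hsl⟩, ⟨t, htl⟩⟩⟩
    simp only [List.length_append, hsl, htl]
    omega
  set φ : T → {w : List G // w.length = N} := fun p => ⟨p.2.1.1.1 ++ p.2.2.1, hφval p⟩ with hφ
  have hinj : Function.Injective φ := by
    rintro ⟨l, ⟨⟨⟨s, hs⟩, hsl⟩, ⟨t, htl⟩⟩⟩ ⟨l', ⟨⟨⟨s', hs'⟩, hsl'⟩, ⟨t', htl'⟩⟩⟩ h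
    simp only [hφ, Subtype.mk_eq_mk] at h
    have key := prefix_unique (x := x) (Y := S ∪ {y}) h
      (by rw [hs.1]; exact Set.mem_union_right _ rfl)
      (by rw [hs'.1]; exact Set.mem_union_right _ rfl)
      (fun t ht => hs.2 t ht) (fun t ht => hs'.2 t ht)
    obtain ⟨h1, h2⟩ := key
    have hll : s.length = l.1 := hsl
    have hll' : s'.length = l'.1 := hsl'
    have hl : l = l' := Fin.ext (by rw [← hll, ← hll', h1])
    subst hl
    subst h1
    subst h2
    rfl
  have hsum : ∑' p : T, pw W (φ p).1 ≤ 1 := by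
    calc ∑' p : T, pw W (φ p).1
        ≤ ∑' w : {w : List G // w.length = N}, pw W w.1 :=
          ENNReal.tsum_comp_le_tsum_of_injective hinj _
      _ = 1 := tsum_len W hW N
    
  have hcomp : ∑' p : T, pw W (φ p).1 = ∑ l ∈ Finset.range (N + 1), AW W x y S l := by
    have : ∀ p : T, pw W (φ p).1 = pw W p.2.1.1.1 * pw W p.2.2.1 := by
      rintro ⟨l, ⟨⟨⟨s, hs⟩, hsl⟩, ⟨t, htl⟩⟩⟩
      exact pw_append W _ _
    simp only [this]
    rw [ENNReal.tsum_sigma']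
    have : ∀ l : Fin (N + 1),
        (∑' p : ({s : {s : List G // wcond x y S s} // s.1.length = l.1} ×
            {t : List G // t.length = N - l.1}), pw W p.1.1.1 * pw W p.2.1)
          = AW W x y S l.1 := by
      intro l
      rw [ENNReal.tsum_prod']
      simp_rw [ENNReal.tsum_mul_left, tsum_len W hW (N - l.1), mul_one]
      rfl
    rw [tsum_fintype]
    simp_rw [this]
    exact Fin.sum_univ_eq_sum_range _ _
  rw [← hcomp]
  exact hsum

lemma FPE_le_one (W : G → ℝ≥0∞) (hW : ∑' g, W g = 1) (x y : G) (S : Set G) :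
    FPE W x y S ≤ 1 := by
  rw [FPE_eq_tsum_AW, ENNReal.tsum_eq_iSup_nat]
  apply iSup_le
  intro N
  calc ∑ l ∈ Finset.range N, AW W x y S l
      ≤ ∑ l ∈ Finset.range (N + 1), AW W x y S l := by
        apply Finset.sum_le_sum_of_subset
        exact Finset.range_subset_range.mpr (Nat.le_succ N)
    _ ≤ 1 := sum_AW_le_one W hW x y S N

lemma wcond_translate (g x y : G) (S : Set G) (s : List G) :
    wcond x y S s ↔ wcond (g * x) (g * y) ((g * ·) '' S) s := by
  have hinj : Function.Injective (g * ·) := mul_right_injective g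
  constructor
  · rintro ⟨h1, h2⟩
    refine ⟨by rw [mul_assoc, h1], ?_⟩
    intro t ht hmem
    apply h2 t ht
    rw [mul_assoc] at hmem
    have : (g * ·) '' S ∪ {g * y} = (g * ·) '' (S ∪ {y}) := by
      rw [Set.image_union, Set.image_singleton]
    rw [this] at hmem
    exact (hinj.mem_set_image).mp hmem
  · rintro ⟨h1, h2⟩
    refine ⟨by rw [mul_assoc] at h1; exact mul_left_cancel h1, ?_⟩
    intro t ht hmem
    apply h2 t ht
    rw [mul_assoc]
    have himg : (g * ·) '' S ∪ {g * y} = (g * ·) '' (S ∪ {y}) := by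
      rw [Set.image_union, Set.image_singleton]
    rw [himg]
    exact (hinj.mem_set_image).mpr hmem

lemma FPE_translate (W : G → ℝ≥0∞) (g x y : G) (S : Set G) :
    FPE W x y S = FPE W (g * x) (g * y) ((g * ·) '' S) := by
  rw [FPE, FPE]
  exact Equiv.tsum_eq ((Equiv.subtypeEquivRight (fun s => wcond_translate g x y S s)).symm) _ |>.symm

end Walks2
section Bridge

variable {G : Type*} [Group G]

lemma pos_steps (l : ℕ) (f : Fin (l + 1) → G) (t : ℕ) (h : t ≤ l) :
    f 0 * ((List.ofFn (fun j : Fin l => (f j.castSucc)⁻¹ * f j.succ)).take t).prod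
      = f ⟨t, by omega⟩ := by
  induction t with
  | zero => simp
  | succ t ih =>
    have ht : t < l := by omega
    have hlen : t < (List.ofFn (fun j : Fin l => (f j.castSucc)⁻¹ * f j.succ)).length := by
      simp [ht]
    rw [List.prod_take_succ _ t hlen, ← mul_assoc, ih (by omega)]
    have hget : (List.ofFn (fun j : Fin l => (f j.castSucc)⁻¹ * f j.succ))[t] =
        (f (⟨t, ht⟩ : Fin l).castSucc)⁻¹ * f (⟨t, ht⟩ : Fin l).succ := by
      simp
    rw [hget]
    have h1 : (⟨t, ht⟩ : Fin l).castSucc = (⟨t, by omega⟩ : Fin (l + 1)) := rfl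
    have h2 : (⟨t, ht⟩ : Fin l).succ = (⟨t + 1, by omega⟩ : Fin (l + 1)) := rfl
    rw [h1, h2, mul_inv_cancel_left]

lemma wcond_ofFn (x y : G) (S : Set G) (l : ℕ) (f : Fin (l + 1) → G)
    (h0 : f 0 = x) (hl : f (Fin.last l) = y)
    (ha : ∀ j : Fin l, f j.castSucc ∉ S ∪ {y}) :
    wcond x y S (List.ofFn (fun j : Fin l => (f j.castSucc)⁻¹ * f j.succ)) := by
  constructor
  · have := pos_steps l f l le_rfl
    rw [List.take_of_length_le (by simp)] at this
    rw [← h0, this]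
    exact hl
  · intro t ht hmem
    simp only [List.length_ofFn] at ht
    have := pos_steps l f t ht.le
    rw [← h0, this] at hmem
    exact ha ⟨t, ht⟩ hmem

lemma path_cond_of_wcond (x y : G) (S : Set G) (l : ℕ) (s : List G)
    (hs : wcond x y S s) (hsl : s.length = l) :
    (fun t : Fin (l + 1) => x * (s.take t.1).prod) 0 = x ∧
    (fun t : Fin (l + 1) => x * (s.take t.1).prod) (Fin.last l) = y ∧
    ∀ j : Fin l, (fun t : Fin (l + 1) => x * (s.take t.1).prod) j.castSucc ∉ S ∪ {y} := by
  refine ⟨by simp, ?_, ?_⟩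
  · show x * (s.take l).prod = y
    rw [← hsl, List.take_length]
    exact hs.1
  · intro j hmem
    exact hs.2 j.1 (by rw [hsl]; exact j.2) hmem

/-- the equivalence between Fin-indexed paths and step lists -/
def pathEquiv (x y : G) (S : Set G) (l : ℕ) :
    {f : Fin (l + 1) → G // f 0 = x ∧ f (Fin.last l) = y ∧
      ∀ j : Fin l, f j.castSucc ∉ S ∪ {y}} ≃
    {s : {s : List G // wcond x y S s} // s.1.length = l} where
  toFun := fun f =>
    ⟨⟨List.ofFn (fun j : Fin l => (f.1 j.castSucc)⁻¹ * f.1 j.succ),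
      wcond_ofFn x y S l f.1 f.2.1 f.2.2.1 f.2.2.2⟩, by simp⟩
  invFun := fun s =>
    ⟨fun t : Fin (l + 1) => x * (s.1.1.take t.1).prod,
      path_cond_of_wcond x y S l s.1.1 s.1.2 s.2⟩
  left_inv := by
    rintro ⟨f, h0, hl, ha⟩
    apply Subtype.ext
    funext t
    show x * ((List.ofFn (fun j : Fin l => (f j.castSucc)⁻¹ * f j.succ)).take t.1).prod = f t
    rw [← h0, pos_steps l f t.1 (by omega)]
  right_inv := by
    rintro ⟨⟨s, hs⟩, hsl⟩
    apply Subtype.ext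
    apply Subtype.ext
    show List.ofFn (fun j : Fin l =>
      (x * (s.take j.castSucc.1).prod)⁻¹ * (x * (s.take j.succ.1).prod)) = s
    apply List.ext_getElem (by simp [hsl])
    intro t h1 h2
    simp only [List.getElem_ofFn]
    show (x * (s.take t).prod)⁻¹ * (x * (s.take (t + 1)).prod) = s[t]
    rw [List.prod_take_succ s t h2]
    rw [mul_inv_rev, mul_assoc]
    rw [← mul_assoc x⁻¹ x, inv_mul_cancel, one_mul, ← mul_assoc, inv_mul_cancel, one_mul]

lemma FP_eq_toReal (μ : G → ℝ) (hμ0 : ∀ g, 0 ≤ μ g)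
    (hW : ∑' g, ENNReal.ofReal (μ g) = 1) (x y : G) (S : Set G) :
    FP μ x y S = (FPE (fun g => ENNReal.ofReal (μ g)) x y S).toReal := by
  set W : G → ℝ≥0∞ := fun g => ENNReal.ofReal (μ g) with hWdef
  have hWtop : ∀ g, W g ≠ ⊤ := fun g => ENNReal.ofReal_ne_top
  rw [FPE_eq_tsum_AW, ENNReal.tsum_toReal_eq
    (fun l => ne_top_of_le_ne_top ENNReal.one_ne_top (AW_le_one W hW x y S l))]
  rw [FP]
  congr 1
  funext l
  have hAW : AW W x y S l =
      ∑' f : {f : Fin (l + 1) → G // f 0 = x ∧ f (Fin.last l) = y ∧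
        ∀ j : Fin l, f j.castSucc ∉ S ∪ {y}},
        pw W ((pathEquiv x y S l f).1.1) := ((pathEquiv x y S l).tsum_eq _).symm
  rw [hAW, ENNReal.tsum_toReal_eq (fun f => pw_ne_top W hWtop _)]
  congr 1
  funext f
  have hfe : ((pathEquiv x y S l) f).1.1 =
      List.ofFn (fun j : Fin l => (f.1 j.castSucc)⁻¹ * f.1 j.succ) := rfl
  rw [hfe, pw, List.map_ofFn, List.prod_ofFn, ENNReal.toReal_prod]
  exact Finset.prod_congr rfl (fun j _ => (ENNReal.toReal_ofReal (hμ0 _)).symm)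

end Bridge
section Words

variable {m : ℕ} (i : Fin m)

/-- length of takeWhile of an append of a singleton -/
lemma takeWhile_append_singleton_length {α : Type*} (q : α → Bool) (L : List α) (y : α) :
    (List.takeWhile q (L ++ [y])).length =
      (List.takeWhile q L).length +
        (if (List.takeWhile q L).length = L.length ∧ q y then 1 else 0) := by
  induction L with
  | nil => by_cases hy : q y <;> simp [List.takeWhile, hy]
  | cons z L ih =>
    by_cases hz : q z
    · simp only [List.cons_append, List.takeWhile_cons_of_pos hz, List.length_cons]
      rw [ih]
      by_cases hc : (List.takeWhile q L).length = L.length ∧ q y = true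
      · rw [if_pos hc, if_pos ⟨by rw [hc.1], hc.2⟩]
      · rw [if_neg hc, if_neg (fun hcc => hc ⟨Nat.add_right_cancel hcc.1, hcc.2⟩)]
    · simp [List.takeWhile_cons, hz]

/-- if takeWhile has full length, the list is all satisfying -/
lemma all_of_takeWhile_full {α : Type*} (q : α → Bool) (L : List α)
    (h : (List.takeWhile q L).length = L.length) : ∀ x ∈ L, q x := by
  have := List.Sublist.eq_of_length (List.takeWhile_sublist q) h
  intro x hx
  rw [← this] at hx
  exact List.mem_takeWhile_imp hx

/-- trailing count of letters (i, b) -/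
def tcount (b : Bool) (w : List (Fin m × Bool)) : ℕ :=
  (List.takeWhile (fun p => p = (i, b)) w.reverse).length

/-- signed trailing run -/
def runZ (w : List (Fin m × Bool)) : ℤ := (tcount i true w : ℤ) - tcount i false w

lemma tcount_cons (b : Bool) (y : Fin m × Bool) (w : List (Fin m × Bool)) :
    tcount i b (y :: w) = tcount i b w +
      (if y = (i, b) ∧ w = List.replicate w.length (i, b) then 1 else 0) := by
  unfold tcount
  rw [List.reverse_cons, takeWhile_append_singleton_length]
  congr 1
  by_cases hfull : (List.takeWhile (fun p => p = (i, b)) w.reverse).length = w.reverse.length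
  · have hall : ∀ x ∈ w.reverse, (fun p => decide (p = (i, b))) x = true :=
      all_of_takeWhile_full _ _ hfull
    have hrep : w = List.replicate w.length (i, b) := by
      rw [List.eq_replicate_iff]
      refine ⟨rfl, fun x hx => ?_⟩
      have := hall x (by simpa using hx)
      simpa using this
    by_cases hy : y = (i, b)
    · rw [if_pos ⟨by simpa using hfull, by simpa using hy⟩, if_pos ⟨hy, hrep⟩]
    · rw [if_neg, if_neg]
      · intro ⟨h1, _⟩; exact hy h1
      · intro ⟨_, h2⟩; exact hy (by simpa using h2)
  · rw [if_neg, if_neg]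
    · intro ⟨_, hrep⟩
      apply hfull
      have : ∀ x ∈ w.reverse, x = (i, b) := by
        intro x hx
        rw [List.mem_reverse] at hx
        rw [hrep] at hx
        exact List.eq_of_mem_replicate hx
      have h2 : List.takeWhile (fun p => p = (i, b)) w.reverse = w.reverse := by
        apply List.takeWhile_eq_self_iff.mpr
        intro x hx
        simp [this x hx]
      rw [h2]
    · intro ⟨h1, _⟩
      exact hfull (by simpa using h1)

/-- key: prepending a letter doesn't change the signed trailing run,
unless the whole word is a constant i-run -/
lemma runZ_cons (y : Fin m × Bool) (w : List (Fin m × Bool))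
    (h : ∀ c : Bool, ¬(y = (i, c) ∧ w = List.replicate w.length (i, c))) :
    runZ i (y :: w) = runZ i w := by
  unfold runZ
  rw [tcount_cons, tcount_cons, if_neg (h true), if_neg (h false)]
  push_cast
  ring

end Words
section WordsTwo

variable {m : ℕ} (i : Fin m)

/-- signed trailing i-run of a free group element -/
def rt (g : FreeGroup (Fin m)) : ℤ := runZ i g.toWord

lemma of_eq_mk (a : Fin m) : FreeGroup.of a = FreeGroup.mk [(a, true)] := by
  rw [← FreeGroup.mk_toWord (x := FreeGroup.of a), FreeGroup.toWord_of]

lemma inv_of_eq_mk (a : Fin m) : (FreeGroup.of a)⁻¹ = FreeGroup.mk [(a, false)] := by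
  rw [of_eq_mk, FreeGroup.inv_mk]
  congr 1

lemma mk_singleton_pow (x : Fin m × Bool) (t : ℕ) :
    (FreeGroup.mk [x]) ^ t = FreeGroup.mk (List.replicate t x) := by
  induction t with
  | zero => rw [pow_zero, List.replicate_zero, FreeGroup.one_eq_mk]
  | succ t ih =>
    rw [pow_succ, ih, FreeGroup.mul_mk, ← List.replicate_succ' (n := t) (a := x)]

lemma mk_replicate_mem_zpowers (c : Bool) (t : ℕ) :
    FreeGroup.mk (List.replicate t (i, c)) ∈ Subgroup.zpowers (FreeGroup.of i) := by
  rw [← mk_singleton_pow]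
  cases c
  · rw [← inv_of_eq_mk]
    exact Subgroup.pow_mem _ (Subgroup.inv_mem _ (Subgroup.mem_zpowers _)) t
  · rw [← of_eq_mk]
    exact Subgroup.pow_mem _ (Subgroup.mem_zpowers _) t

lemma runZ_nil : runZ i ([] : List (Fin m × Bool)) = 0 := rfl

lemma runZ_singleton (x : Fin m × Bool) (hx : x.1 ≠ i) : runZ i [x] = 0 := by
  have h : ∀ b : Bool, tcount i b [x] = 0 := by
    intro b
    unfold tcount
    have : x ≠ (i, b) := fun h => hx (by rw [h])
    simp [this]
  unfold runZ
  rw [h true, h false]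
  rfl

lemma takeWhile_replicate_self {α : Type*} [DecidableEq α] (a : α) (t : ℕ) :
    List.takeWhile (fun p => decide (p = a)) (List.replicate t a) = List.replicate t a := by
  rw [List.takeWhile_eq_self_iff]
  intro x hx
  simp [List.eq_of_mem_replicate hx]

lemma runZ_replicate (t : ℕ) (c : Bool) :
    runZ i (List.replicate t (i, c)) = if c then (t : ℤ) else -(t : ℤ) := by
  have hrev : (List.replicate t ((i, c) : Fin m × Bool)).reverse = List.replicate t (i, c) :=
    List.reverse_replicate (n := t)
  have hsame : tcount i c (List.replicate t (i, c)) = t := by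
    unfold tcount
    rw [hrev, takeWhile_replicate_self]
    simp
  have hother : tcount i (!c) (List.replicate t (i, c)) = 0 := by
    unfold tcount
    rw [hrev]
    cases t with
    | zero => rfl
    | succ t =>
      rw [List.replicate_succ, List.takeWhile_cons_of_neg]
      · rfl
      · simp
  cases c
  · unfold runZ
    have h1 : tcount i true (List.replicate t ((i, false) : Fin m × Bool)) = 0 := hother
    rw [h1, hsame]
    simp
  · unfold runZ
    have h1 : tcount i false (List.replicate t ((i, true) : Fin m × Bool)) = 0 := hother
    rw [h1, hsame]
    simp

lemma rt_one : rt i (1 : FreeGroup (Fin m)) = 0 := by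
  rw [rt, FreeGroup.toWord_one]
  exact runZ_nil i

lemma rt_zpow (s : ℤ) : rt i (FreeGroup.of i ^ s) = s := by
  rcases s with t | t
  · show rt i (FreeGroup.of i ^ (t : ℤ)) = t
    rw [zpow_natCast, rt, FreeGroup.toWord_of_pow, runZ_replicate]
    simp
  · show rt i (FreeGroup.of i ^ (Int.negSucc t)) = Int.negSucc t
    rw [zpow_negSucc, ← inv_pow, inv_of_eq_mk, mk_singleton_pow, rt, FreeGroup.toWord_mk,
      FreeGroup.reduce_replicate, runZ_replicate]
    simp [Int.negSucc_eq]

lemma pow_of_injective : Function.Injective (fun j : ℕ => FreeGroup.of i ^ j) := by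
  intro a b h
  have ha := rt_zpow i (a : ℤ)
  have hb := rt_zpow i (b : ℤ)
  rw [zpow_natCast] at ha hb
  simp only at h
  rw [h] at ha
  rw [hb] at ha
  exact_mod_cast ha.symm

lemma eq_pow_rt_of_mem_zpowers (g : FreeGroup (Fin m))
    (hg : g ∈ Subgroup.zpowers (FreeGroup.of i)) : g = FreeGroup.of i ^ (rt i g) := by
  obtain ⟨s, rfl⟩ := Subgroup.mem_zpowers_iff.mp hg
  rw [rt_zpow]

/-- single letter left multiplication doesn't change rt (away from the i-axis) -/
lemma rt_mk_cons (x : Fin m × Bool) (g : FreeGroup (Fin m))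
    (h : x.1 ≠ i ∨ g ∉ Subgroup.zpowers (FreeGroup.of i)) :
    rt i (FreeGroup.mk [x] * g) = rt i g := by
  have hw : FreeGroup.mk [x] * g = FreeGroup.mk (x :: g.toWord) := by
    conv_lhs => rw [← FreeGroup.mk_toWord (x := g)]
    rw [FreeGroup.mul_mk]
    rfl
  rw [hw, rt, rt, FreeGroup.toWord_mk, FreeGroup.reduce.cons, FreeGroup.reduce_toWord]
  cases hwd : g.toWord with
  | nil =>
    have hg1 : g = 1 := FreeGroup.toWord_eq_nil_iff.mp hwd
    have hxi : x.1 ≠ i := by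
      rcases h with h | h
      · exact h
      · exact absurd (hg1 ▸ Subgroup.one_mem _) h
    show runZ i [x] = runZ i []
    rw [runZ_singleton i x hxi, runZ_nil]
  | cons y ys =>
    have hgmk : g = FreeGroup.mk (y :: ys) := by
      rw [← hwd, FreeGroup.mk_toWord]
    show runZ i (if x.1 = y.1 ∧ x.2 = !y.2 then ys else x :: y :: ys) = runZ i (y :: ys)
    split_ifs with hc
    · -- cancellation
      symm
      apply runZ_cons
      intro c ⟨hy, hys⟩
      have : g ∈ Subgroup.zpowers (FreeGroup.of i) := by
        have hgrep : g = FreeGroup.mk (List.replicate (ys.length + 1) (i, c)) := by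
          rw [hgmk, hy, List.replicate_succ]
          exact congrArg _ (congrArg _ hys)
        rw [hgrep]
        exact mk_replicate_mem_zpowers i c _
      rcases h with h | h
      · exact h (by rw [hc.1, hy])
      · exact h this
    · apply runZ_cons
      intro c ⟨hx, hw'⟩
      have : g ∈ Subgroup.zpowers (FreeGroup.of i) := by
        rw [hgmk, hw']
        exact mk_replicate_mem_zpowers i c _
      rcases h with h | h
      · exact h (by rw [hx])
      · exact h this

lemma rt_mk_pow (x : Fin m × Bool) (t : ℕ) (g : FreeGroup (Fin m))
    (h : x.1 ≠ i ∨ g ∉ Subgroup.zpowers (FreeGroup.of i)) :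
    rt i ((FreeGroup.mk [x]) ^ t * g) = rt i g := by
  induction t with
  | zero => rw [pow_zero, one_mul]
  | succ t ih =>
    rw [pow_succ', mul_assoc]
    have h' : x.1 ≠ i ∨ ((FreeGroup.mk [x]) ^ t * g) ∉ Subgroup.zpowers (FreeGroup.of i) := by
      rcases h with h | h
      · exact Or.inl h
      · by_cases hxi : x.1 = i
        · right
          have hx : FreeGroup.mk [x] ∈ Subgroup.zpowers (FreeGroup.of i) := by
            have : ([x] : List (Fin m × Bool)) = List.replicate 1 (i, x.2) := by
              simp [Prod.ext_iff, hxi]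
            rw [this]
            exact mk_replicate_mem_zpowers i x.2 1
          rw [Subgroup.mul_mem_cancel_left _ (Subgroup.pow_mem _ hx t)]
          exact h
        · exact Or.inl hxi
    rw [rt_mk_cons i x _ h', ih]

/-- multi-letter step lemma -/
lemma rt_zpow_mul (i' : Fin m) (l : ℤ) (g : FreeGroup (Fin m))
    (h : i' ≠ i ∨ g ∉ Subgroup.zpowers (FreeGroup.of i)) :
    rt i (FreeGroup.of i' ^ l * g) = rt i g := by
  have h' : ∀ x : Fin m × Bool, x.1 = i' →
      (x.1 ≠ i ∨ g ∉ Subgroup.zpowers (FreeGroup.of i)) := by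
    intro x hx
    rcases h with h | h
    · exact Or.inl (by rw [hx]; exact h)
    · exact Or.inr h
  rcases l with t | t
  · show rt i (FreeGroup.of i' ^ ((t : ℕ) : ℤ) * g) = rt i g
    rw [zpow_natCast, of_eq_mk]
    exact rt_mk_pow i (i', true) t g (h' _ rfl)
  · rw [zpow_negSucc, ← inv_pow, inv_of_eq_mk]
    exact rt_mk_pow i (i', false) (t + 1) g (h' _ rfl)

end WordsTwo
section Cross

variable {m : ℕ} (i : Fin m)

/-- any supported walk from 1 to (of i)^k with k > n must pass through
{of i, ..., of i ^ n} -/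
lemma cross (n : ℕ) (s : List (FreeGroup (Fin m)))
    (hsupp : ∀ g ∈ s, ∃ (i' : Fin m) (l : ℤ), 1 ≤ |l| ∧ |l| ≤ (n : ℤ) ∧ g = FreeGroup.of i' ^ l)
    (k : ℕ) (hk : n < k) (hprod : s.prod = FreeGroup.of i ^ k) :
    ∃ t < s.length, ∃ j : ℕ, 1 ≤ j ∧ j ≤ n ∧ (s.take t).prod = FreeGroup.of i ^ j := by
  classical
  set f : ℕ → ℤ := fun t => rt i ((s.take t).prod)⁻¹ with hf
  have hf0 : f 0 = 0 := by
    simp only [hf, List.take_zero, List.prod_nil, inv_one]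
    exact rt_one i
  have hflen : f s.length = -(k : ℤ) := by
    simp only [hf, List.take_length, hprod]
    rw [← zpow_natCast, ← zpow_neg]
    exact rt_zpow i _
  have hQ : ∃ t, t ≤ s.length ∧ f t ≤ -1 := by
    refine ⟨s.length, le_rfl, ?_⟩
    rw [hflen]
    omega
  obtain ⟨τ, ⟨hτlen, hτval⟩, hτmin⟩ :
      ∃ τ, (τ ≤ s.length ∧ f τ ≤ -1) ∧ ∀ t < τ, ¬(t ≤ s.length ∧ f t ≤ -1) :=
    ⟨Nat.find hQ, Nat.find_spec hQ, fun t ht => Nat.find_min hQ ht⟩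
  have hτ0 : τ ≠ 0 := by
    intro h0
    rw [h0, hf0] at hτval
    omega
  obtain ⟨t₀, ht₀⟩ : ∃ t₀, τ = t₀ + 1 := ⟨τ - 1, by omega⟩
  have hmin : ¬(t₀ ≤ s.length ∧ f t₀ ≤ -1) := hτmin t₀ (by omega)
  have hft₀ : 0 ≤ f t₀ := by
    by_contra hcon
    exact hmin ⟨by omega, by omega⟩
  have ht₀lt : t₀ < s.length := by omega
  have hstep : ((s.take τ).prod)⁻¹ = (s[t₀]'ht₀lt)⁻¹ * ((s.take t₀).prod)⁻¹ := by
    rw [ht₀, List.prod_take_succ s t₀ ht₀lt, mul_inv_rev]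
  obtain ⟨i', l, hl1, hln, hgl⟩ := hsupp (s[t₀]'ht₀lt) (List.getElem_mem ht₀lt)
  have hstep' : ((s.take τ).prod)⁻¹ = FreeGroup.of i' ^ (-l) * ((s.take t₀).prod)⁻¹ := by
    rw [hstep, hgl, ← zpow_neg]
  have hP : ((s.take t₀).prod)⁻¹ ∈ Subgroup.zpowers (FreeGroup.of i) := by
    by_contra hnP
    have h1 := rt_zpow_mul i i' (-l) _ (Or.inr hnP)
    rw [← hstep'] at h1
    have h2 : f τ = f t₀ := h1
    omega
  have hii : i' = i := by
    by_contra hii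
    have h1 := rt_zpow_mul i i' (-l) (((s.take t₀).prod)⁻¹) (Or.inl hii)
    rw [← hstep'] at h1
    have h2 : f τ = f t₀ := h1
    omega
  subst hii
  have hPval : ((s.take t₀).prod)⁻¹ = FreeGroup.of i' ^ (f t₀) :=
    eq_pow_rt_of_mem_zpowers i' _ hP
  have hτform : ((s.take τ).prod)⁻¹ = FreeGroup.of i' ^ (-l + f t₀) := by
    rw [hstep', hPval, ← zpow_add]
  have hfτ : f τ = -l + f t₀ := by
    have : f τ = rt i' ((s.take τ).prod)⁻¹ := rfl
    rw [this, hτform]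
    exact rt_zpow i' _
  have habs : |l| = l ∨ |l| = -l := abs_choice l
  have hlpos : 0 < l := by omega
  have habs' : |l| = l := by omega
  set j : ℕ := (l - f t₀).toNat with hj
  have hjval : (j : ℤ) = l - f t₀ := Int.toNat_of_nonneg (by omega)
  have hj1 : 1 ≤ j := by omega
  have hjn : j ≤ n := by
    have hcast : (j : ℤ) ≤ (n : ℤ) := by omega
    exact_mod_cast hcast
  have hτlt : τ < s.length := by
    rcases Nat.lt_or_ge τ s.length with h | h
    · exact h
    · exfalso
      have heq : τ = s.length := le_antisymm hτlen h
      rw [heq, hflen] at hfτ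
      omega
  refine ⟨τ, hτlt, j, hj1, hjn, ?_⟩
  have hform : (s.take τ).prod = FreeGroup.of i' ^ (l - f t₀) := by
    have h1 := congrArg (·⁻¹) hτform
    simp only [inv_inv] at h1
    rw [h1, ← zpow_neg]
    congr 1
    omega
  rw [hform, ← hjval, zpow_natCast]

end Cross
section Decomp

variable {m : ℕ}

lemma decomp (n : ℕ) (W : FreeGroup (Fin m) → ℝ≥0∞)
    (hstep : ∀ g, W g ≠ 0 →
      ∃ (i' : Fin m) (l : ℤ), 1 ≤ |l| ∧ |l| ≤ (n : ℤ) ∧ g = FreeGroup.of i' ^ l)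
    (i : Fin m) (B : Set (FreeGroup (Fin m)))
    (hB : B = (fun j : ℕ => FreeGroup.of i ^ j) '' Set.Icc 1 n)
    (k : ℕ) (hk : n < k) :
    FPE W 1 (FreeGroup.of i ^ k) ∅ =
      ∑ j ∈ Finset.Icc 1 n,
        FPE W 1 (FreeGroup.of i ^ j) (B \ {FreeGroup.of i ^ j}) *
          FPE W (FreeGroup.of i ^ j) (FreeGroup.of i ^ k) ∅ := by
  classical
  set a := FreeGroup.of i with ha
  -- basic facts
  have hmemB : ∀ j : ℕ, 1 ≤ j → j ≤ n → a ^ j ∈ B := by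
    intro j h1 h2
    rw [hB]
    exact ⟨j, Set.mem_Icc.mpr ⟨h1, h2⟩, rfl⟩
  have hBchar : ∀ x ∈ B, ∃ j : ℕ, 1 ≤ j ∧ j ≤ n ∧ x = a ^ j := by
    intro x hx
    rw [hB] at hx
    obtain ⟨j, hj, hje⟩ := hx
    exact ⟨j, (Set.mem_Icc.mp hj).1, (Set.mem_Icc.mp hj).2, hje.symm⟩
  have hjk : ∀ j : ℕ, j ≤ n → a ^ j ≠ a ^ k := by
    intro j hj hje
    have := pow_of_injective i hje
    omega
  have hBj : ∀ j : ℕ, 1 ≤ j → j ≤ n → (B \ {a ^ j}) ∪ {a ^ j} = B := by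
    intro j h1 h2
    rw [Set.diff_union_self]
    exact Set.union_eq_self_of_subset_right (Set.singleton_subset_iff.mpr (hmemB j h1 h2))
  -- index type
  set T := (j : {j : ℕ // j ∈ Finset.Icc 1 n}) ×
    ({u : List (FreeGroup (Fin m)) // wcond 1 (a ^ j.1) (B \ {a ^ j.1}) u} ×
     {v : List (FreeGroup (Fin m)) // wcond (a ^ j.1) (a ^ k) ∅ v}) with hT
  set gfun : T → ℝ≥0∞ := fun p => pw W p.2.1.1 * pw W p.2.2.1 with hgfun
  -- the map is well defined
  have hmap : ∀ p : T, gfun p ≠ 0 → wcond 1 (a ^ k) ∅ (p.2.1.1 ++ p.2.2.1) := by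
    rintro ⟨jj, ⟨u, hu⟩, ⟨v, hv⟩⟩ hne
    obtain ⟨hj1, hjn⟩ := Finset.mem_Icc.mp jj.2
    show wcond 1 (a ^ k) ∅ (u ++ v)
    have hne' : pw W u ≠ 0 ∧ pw W v ≠ 0 := by
      have : pw W u * pw W v ≠ 0 := hne
      exact mul_ne_zero_iff.mp this
    have husupp : ∀ g ∈ u, W g ≠ 0 := (pw_ne_zero_iff W u).mp hne'.1
    have huprod : u.prod = a ^ jj.1 := by
      have := hu.1; rwa [one_mul] at this
    constructor
    · rw [one_mul, List.prod_append, huprod]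
      exact hv.1
    · intro t ht hmem
      rw [List.length_append] at ht
      simp only [Set.empty_union, Set.mem_singleton_iff, one_mul] at hmem
      rcases Nat.lt_trichotomy t u.length with hlt | heq | hgt
      · -- position inside u equals a^k : impossible by crossing
        rw [List.take_append_of_le_length hlt.le] at hmem
        have hsupp' : ∀ g ∈ u.take t, ∃ (i' : Fin m) (l : ℤ),
            1 ≤ |l| ∧ |l| ≤ (n : ℤ) ∧ g = FreeGroup.of i' ^ l := by
          intro g hg
          exact hstep g (husupp g (List.mem_of_mem_take hg))
        obtain ⟨t', ht', j', hj'1, hj'n, hj'e⟩ := cross i n (u.take t) hsupp' k hk hmem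
        rw [List.length_take] at ht'
        have ht't : t' < t := lt_of_lt_of_le ht' (min_le_left _ _)
        have ht'' : t' < u.length := lt_of_lt_of_le ht' (min_le_right _ _)
        rw [List.take_take, min_eq_left ht't.le] at hj'e
        apply hu.2 t' ht''
        rw [one_mul, hBj jj.1 hj1 hjn, hj'e]
        exact hmemB j' hj'1 hj'n
      · -- position is a^j ≠ a^k
        subst heq
        rw [List.take_append_of_le_length le_rfl, List.take_length, huprod] at hmem
        exact hjk jj.1 hjn hmem
      · -- position inside v
        obtain ⟨r, hr⟩ : ∃ r, t = u.length + r := ⟨t - u.length, by omega⟩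
        rw [hr, List.take_length_add_append, List.prod_append, huprod] at hmem
        apply hv.2 r (by omega)
        simp only [Set.empty_union, Set.mem_singleton_iff]
        exact hmem
  -- uniqueness of splitting point
  have huniq : ∀ (j j' : ℕ), 1 ≤ j → j ≤ n → 1 ≤ j' → j' ≤ n →
      ∀ (u u' v v' : List (FreeGroup (Fin m))),
      wcond 1 (a ^ j) (B \ {a ^ j}) u → wcond 1 (a ^ j') (B \ {a ^ j'}) u' →
      u ++ v = u' ++ v' → u = u' ∧ v = v' := by
    intro j j' hj1 hjn hj'1 hj'n u u' v v' hu hu' heq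
    apply prefix_unique (x := (1 : FreeGroup (Fin m))) (Y := B) heq
    · rw [hu.1]; exact hmemB j hj1 hjn
    · rw [hu'.1]; exact hmemB j' hj'1 hj'n
    · intro t ht hmem
      apply hu.2 t ht
      rw [hBj j hj1 hjn]
      exact hmem
    · intro t ht hmem
      apply hu'.2 t ht
      rw [hBj j' hj'1 hj'n]
      exact hmem
  -- the bijection
  have main : FPE W 1 (a ^ k) ∅ = ∑' p : T, gfun p := by
    rw [FPE]
    refine tsum_eq_tsum_of_ne_zero_bij
      (fun p => ⟨p.1.2.1.1 ++ p.1.2.2.1, hmap p.1 p.2⟩) ?_ ?_ ?_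
    · -- injective
      rintro ⟨⟨jj, uu, vv⟩, hne⟩ ⟨⟨jj', uu', vv'⟩, hne'⟩ heq
      obtain ⟨hj1, hjn⟩ := Finset.mem_Icc.mp jj.2
      obtain ⟨hj'1, hj'n⟩ := Finset.mem_Icc.mp jj'.2
      simp only [Subtype.mk_eq_mk] at heq
      obtain ⟨hueq, hveq⟩ := huniq jj.1 jj'.1 hj1 hjn hj'1 hj'n
        uu.1 uu'.1 vv.1 vv'.1 uu.2 uu'.2 heq
      have hjeq : jj = jj' := by
        apply Subtype.ext
        apply pow_of_injective i
        show a ^ jj.1 = a ^ jj'.1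
        rw [← one_mul (a ^ jj.1), ← one_mul (a ^ jj'.1), ← uu.2.1, ← uu'.2.1, hueq]
      subst hjeq
      have huu : uu = uu' := Subtype.ext hueq
      have hvv : vv = vv' := Subtype.ext hveq
      subst huu
      subst hvv
      rfl
    · -- support ⊆ range
      rintro ⟨sl, hw⟩ hs
      have hs' : pw W sl ≠ 0 := hs
      have hsupp' : ∀ g ∈ sl, ∃ (i' : Fin m) (l : ℤ),
          1 ≤ |l| ∧ |l| ≤ (n : ℤ) ∧ g = FreeGroup.of i' ^ l := by
        intro g hg
        exact hstep g ((pw_ne_zero_iff W sl).mp hs' g hg)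
      have hprodk : sl.prod = a ^ k := by
        have := hw.1
        rwa [one_mul] at this
      have hQ : ∃ t, (sl.take t).prod ∈ B ∧ t < sl.length := by
        obtain ⟨t, ht, j, hj1, hjn, hje⟩ := cross i n sl hsupp' k hk hprodk
        exact ⟨t, by rw [hje]; exact hmemB j hj1 hjn, ht⟩
      obtain ⟨τ, ⟨hτB, hτlen⟩, hτmin⟩ :
          ∃ τ, ((sl.take τ).prod ∈ B ∧ τ < sl.length) ∧
            ∀ t < τ, ¬((sl.take t).prod ∈ B ∧ t < sl.length) :=
        ⟨Nat.find hQ, Nat.find_spec hQ, fun t ht => Nat.find_min hQ ht⟩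
      obtain ⟨j, hj1, hjn, hje⟩ := hBchar _ hτB
      have hwu : wcond 1 (a ^ j) (B \ {a ^ j}) (sl.take τ) := by
        constructor
        · rw [one_mul, ← hje]
        · intro t ht hmem
          rw [List.length_take] at ht
          have ht' : t < τ := lt_of_lt_of_le ht (min_le_left _ _)
          rw [List.take_take, min_eq_left ht'.le, one_mul, hBj j hj1 hjn] at hmem
          exact hτmin t ht' ⟨hmem, by omega⟩
      have hwv : wcond (a ^ j) (a ^ k) ∅ (sl.drop τ) := by
        constructor
        · rw [← hje, ← List.prod_append, List.take_append_drop, hprodk]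
        · intro r hr hmem
          rw [List.length_drop] at hr
          apply hw.2 (τ + r) (by omega)
          rw [one_mul, List.take_add, List.prod_append]
          simp only [Set.empty_union, Set.mem_singleton_iff] at hmem ⊢
          rw [← hje] at hmem
          exact hmem
      have hptsupp : gfun ⟨⟨j, Finset.mem_Icc.mpr ⟨hj1, hjn⟩⟩,
          (⟨sl.take τ, hwu⟩, ⟨sl.drop τ, hwv⟩)⟩ ≠ 0 := by
        show pw W (sl.take τ) * pw W (sl.drop τ) ≠ 0
        rw [← pw_append, List.take_append_drop]
        exact hs'
      refine ⟨⟨⟨⟨j, Finset.mem_Icc.mpr ⟨hj1, hjn⟩⟩,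
        (⟨sl.take τ, hwu⟩, ⟨sl.drop τ, hwv⟩)⟩, hptsupp⟩, ?_⟩
      apply Subtype.ext
      show sl.take τ ++ sl.drop τ = sl
      exact List.take_append_drop τ sl
    · -- weights agree
      rintro ⟨⟨jj, uu, vv⟩, hne⟩
      show pw W (uu.1 ++ vv.1) = pw W uu.1 * pw W vv.1
      exact pw_append W uu.1 vv.1
  -- compute the RHS
  rw [main, ENNReal.tsum_sigma']
  have hinner : ∀ jj : {j : ℕ // j ∈ Finset.Icc 1 n},
      (∑' p : ({u : List (FreeGroup (Fin m)) // wcond 1 (a ^ jj.1) (B \ {a ^ jj.1}) u} ×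
        {v : List (FreeGroup (Fin m)) // wcond (a ^ jj.1) (a ^ k) ∅ v}),
        gfun ⟨jj, p⟩)
      = FPE W 1 (a ^ jj.1) (B \ {a ^ jj.1}) * FPE W (a ^ jj.1) (a ^ k) ∅ := by
    intro jj
    have hpt : ∀ p : ({u : List (FreeGroup (Fin m)) // wcond 1 (a ^ jj.1) (B \ {a ^ jj.1}) u} ×
        {v : List (FreeGroup (Fin m)) // wcond (a ^ jj.1) (a ^ k) ∅ v}),
        gfun ⟨jj, p⟩ = pw W p.1.1 * pw W p.2.1 := fun p => rfl
    simp only [hpt]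
    rw [ENNReal.tsum_prod']
    simp_rw [ENNReal.tsum_mul_left]
    rw [FPE, FPE, ENNReal.tsum_mul_right]
  simp_rw [hinner]
  rw [← Finset.tsum_subtype (Finset.Icc 1 n)
    (fun j => FPE W 1 (a ^ j) (B \ {a ^ j}) * FPE W (a ^ j) (a ^ k) ∅)]

end Decomp
/-- the linear recurrence for the first-passage function along powers
of a generator, for a random walk supported on powers of the generators. -/
theorem stmt13 {m : ℕ} (n : ℕ) (hn : 1 ≤ n) (μ : FreeGroup (Fin m) → ℝ)
    (hμ : IsProb μ)
    (hsupp : ∀ g : FreeGroup (Fin m), 0 < μ g →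
      ∃ (i : Fin m) (l : ℤ), 1 ≤ |l| ∧ |l| ≤ (n : ℤ) ∧ g = FreeGroup.of i ^ l)
    (i : Fin m)
    (B : Set (FreeGroup (Fin m)))
    (hB : B = (fun j : ℕ => FreeGroup.of i ^ j) '' Set.Icc 1 n)
    (p : ℕ → ℝ)
    (hp : ∀ j, 1 ≤ j → j ≤ n →
      p j = FP μ 1 (FreeGroup.of i ^ j) (B \ {FreeGroup.of i ^ j}))
    (k : ℕ) (hk : n < k) :
    FP μ 1 (FreeGroup.of i ^ k) ∅ =
      ∑ j ∈ Finset.Icc 1 n, p j * FP μ 1 (FreeGroup.of i ^ (k - j)) ∅ := by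
  obtain ⟨hμ0, hμ1⟩ := hμ
  have hsummable : Summable μ := by
    by_contra hns
    rw [tsum_eq_zero_of_not_summable hns] at hμ1
    norm_num at hμ1
  set W : FreeGroup (Fin m) → ℝ≥0∞ := fun g => ENNReal.ofReal (μ g) with hWdef
  have hW1 : ∑' g, W g = 1 := by
    calc ∑' g, W g = ENNReal.ofReal (∑' g, μ g) :=
        (ENNReal.ofReal_tsum_of_nonneg hμ0 hsummable).symm
      _ = 1 := by rw [hμ1, ENNReal.ofReal_one]
  have hstep : ∀ g, W g ≠ 0 →
      ∃ (i' : Fin m) (l : ℤ), 1 ≤ |l| ∧ |l| ≤ (n : ℤ) ∧ g = FreeGroup.of i' ^ l := by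
    intro g hg
    apply hsupp
    by_contra hle
    exact hg (by simp [hWdef, ENNReal.ofReal_eq_zero.mpr (not_lt.mp hle)])
  have hd := decomp n W hstep i B hB k hk
  have hfin : ∀ (x y : FreeGroup (Fin m)) (S : Set (FreeGroup (Fin m))), FPE W x y S ≠ ⊤ :=
    fun x y S => ne_top_of_le_ne_top ENNReal.one_ne_top (FPE_le_one W hW1 x y S)
  have htrans : ∀ j, 1 ≤ j → j ≤ n →
      FPE W (FreeGroup.of i ^ j) (FreeGroup.of i ^ k) ∅ =
        FPE W 1 (FreeGroup.of i ^ (k - j)) ∅ := by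
    intro j h1 h2
    have hjle : j ≤ k := le_of_lt (lt_of_le_of_lt h2 hk)
    have htr := FPE_translate W (FreeGroup.of i ^ j) 1 (FreeGroup.of i ^ (k - j)) ∅
    rw [mul_one, Set.image_empty, ← pow_add, Nat.add_sub_cancel' hjle] at htr
    exact htr.symm
  rw [FP_eq_toReal μ hμ0 hW1, hd, ENNReal.toReal_sum
    (fun j hj => ENNReal.mul_ne_top (hfin _ _ _) (hfin _ _ _))]
  apply Finset.sum_congr rfl
  intro j hj
  obtain ⟨h1, h2⟩ := Finset.mem_Icc.mp hj
  rw [ENNReal.toReal_mul, hp j h1 h2, FP_eq_toReal μ hμ0 hW1, FP_eq_toReal μ hμ0 hW1,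
    htrans j h1 h2]
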